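/- Let p and q be probability density functions on a finite type α (nonnegative, summing to 1). Define the optimal discriminator D*(x) = p(x) / (p(x) + q(x)) (where p(x)+q(x) > 0 for all x). Then for any function D : α → (0,1), ∑ x, p(x) * log(D(x)) + q(x) * log(1 - D(x)) ≤ ∑ x, p(x) * log(D*(x)) + q(x) * log(1 - D*(x)). -/

import Mathlib

lemma aux_gan (a b t : ℝ) (ha : 0 ≤ a) (hb : 0 ≤ b) (hab : 0 < a + b)
    (ht : 0 < t) (ht1 : t < 1) :
    a * Real.log t + b * Real.log (1 - t) ≤
    a * Real.log (a / (a + b)) + b * Real.log (1 - a / (a + b)) := by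
  have hs : a + b ≠ 0 := ne_of_gt hab
  have hb' : 1 - a / (a + b) = b / (a + b) := by field_simp; ring
  rw [hb']
  rcases eq_or_lt_of_le ha with ha0 | ha0
  · -- a = 0
    have hbpos : 0 < b := by linarith
    rw [← ha0]
    simp only [zero_mul, zero_add, div_self hbpos.ne', Real.log_one, mul_zero]
    have h0 : Real.log (1 - t) ≤ 0 := Real.log_nonpos (by linarith) (by linarith)
    nlinarith
  rcases eq_or_lt_of_le hb with hb0 | hb0
  · rw [← hb0]
    simp only [zero_mul, add_zero, div_self ha0.ne', Real.log_one, mul_zero]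
    have h0 : Real.log t ≤ 0 := Real.log_nonpos (le_of_lt ht) (le_of_lt ht1)
    nlinarith
  · -- a, b > 0
    have htt : (0:ℝ) < 1 - t := by linarith
    have h1 : Real.log t - Real.log (a / (a + b)) ≤ t * (a + b) / a - 1 := by
      have h := Real.log_le_sub_one_of_pos (show 0 < t * (a + b) / a by positivity)
      rw [Real.log_div (mul_pos ht hab).ne' ha0.ne', Real.log_mul ht.ne' hs] at h
      rw [Real.log_div ha0.ne' hs]
      linarith
    have h2 : Real.log (1 - t) - Real.log (b / (a + b)) ≤ (1 - t) * (a + b) / b - 1 := by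
      have h := Real.log_le_sub_one_of_pos (show 0 < (1 - t) * (a + b) / b by positivity)
      rw [Real.log_div (mul_pos htt hab).ne' hb0.ne', Real.log_mul htt.ne' hs] at h
      rw [Real.log_div hb0.ne' hs]
      linarith
    have e1 : a * (t * (a + b) / a - 1) = t * (a + b) - a := by field_simp
    have e2 : b * ((1 - t) * (a + b) / b - 1) = (1 - t) * (a + b) - b := by field_simp
    nlinarith [mul_le_mul_of_nonneg_left h1 ha, mul_le_mul_of_nonneg_left h2 hb]

theorem stmt_3 {α : Type*} [Fintype α] (p q : α → ℝ)
    (hp : ∀ x, 0 ≤ p x) (hq : ∀ x, 0 ≤ q x)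
    (hpq : ∀ x, 0 < p x + q x)
    (hps : ∑ x, p x = 1) (hqs : ∑ x, q x = 1)
    (D : α → ℝ) (hD : ∀ x, D x ∈ Set.Ioo (0 : ℝ) 1) :
    ∑ x, (p x * Real.log (D x) + q x * Real.log (1 - D x)) ≤
    ∑ x, (p x * Real.log (p x / (p x + q x)) +
          q x * Real.log (1 - p x / (p x + q x))) := by
  apply Finset.sum_le_sum
  intro x _
  exact aux_gan (p x) (q x) (D x) (hp x) (hq x) (hpq x) (hD x).1 (hD x).2
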